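/- arXiv:2507.19920 — 4 statements merged into one kernel-verified Lean document; each statement's English description precedes it below -/
import Mathlib

section
/- Let Δ̃ be an n×n Hermitian matrix. The function ρ ↦ Tr(ρ log ρ) − Tr(ρ Δ̃) over positive semi-definite n×n matrices ρ attains its unique minimum at ρ = exp(Δ̃ − I_n), where exp is the matrix exponential and I_n is the identity matrix. -/
open Matrix Kronecker
open scoped ComplexOrder

/-- Matrix logarithm of a Hermitian matrix via its spectral decomposition,
with the convention `Real.log 0 = 0` off the support. -/
noncomputable def matLog {n : Type*} [Fintype n] [DecidableEq n] {A : Matrix n n ℂ}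
    (hA : A.IsHermitian) : Matrix n n ℂ :=
  (hA.eigenvectorUnitary : Matrix n n ℂ) *
    Matrix.diagonal (fun i => (Real.log (hA.eigenvalues i) : ℂ)) *
    star (hA.eigenvectorUnitary : Matrix n n ℂ)

/-- `Tr(A log A)` for a Hermitian matrix `A`, i.e. `∑ λᵢ log λᵢ` with `0 log 0 = 0`. -/
noncomputable def entSum {n : Type*} [Fintype n] [DecidableEq n] {A : Matrix n n ℂ}
    (hA : A.IsHermitian) : ℝ :=
  ∑ i, hA.eigenvalues i * Real.log (hA.eigenvalues i)

/-- Quantum relative entropy `S(ρ‖σ) = Tr(ρ log ρ) − Tr(ρ log σ)`. -/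
noncomputable def qRelEnt {n : Type*} [Fintype n] [DecidableEq n] {ρ σ : Matrix n n ℂ}
    (hρ : ρ.IsHermitian) (hσ : σ.IsHermitian) : ℝ :=
  entSum hρ - (Matrix.trace (ρ * matLog hσ)).re

/-- The objective `ρ ↦ Tr(ρ log ρ) − Tr(ρ Δ̃)`. -/
noncomputable def obj {n : Type*} [Fintype n] [DecidableEq n] (Δ : Matrix n n ℂ)
    {ρ : Matrix n n ℂ} (hρ : ρ.IsHermitian) : ℝ :=
  entSum hρ - (Matrix.trace (ρ * Δ)).re

/-- Partial trace over the first tensor factor. -/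
noncomputable def ptrace1 {n m : Type*} [Fintype n] (C : Matrix (n × m) (n × m) ℂ) :
    Matrix m m ℂ :=
  Matrix.of fun k l => ∑ i, C (i, k) (i, l)

/-- Partial trace over the second tensor factor. -/
noncomputable def ptrace2 {n m : Type*} [Fintype m] (C : Matrix (n × m) (n × m) ℂ) :
    Matrix n n ℂ :=
  Matrix.of fun i j => ∑ k, C (i, k) (j, k)

section Aux
open Polynomial

lemma exists_interp (s : Finset ℝ) (f : ℝ → ℝ) : ∃ p : ℝ[X], ∀ x ∈ s, p.eval x = f x := by
  refine ⟨Lagrange.interpolate s id f, fun x hx => ?_⟩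
  simpa using Lagrange.eval_interpolate_at_node (s := s) (v := id) f (Set.injOn_id _) hx

variable {n : Type*} [Fintype n] [DecidableEq n]

lemma conj_pow' {w A : Matrix n n ℂ} (h1 : star w * w = 1) (h2 : w * star w = 1) (k : ℕ) :
    (w * A * star w) ^ k = w * A ^ k * star w := by
  induction k with
  | zero => simp [h2]
  | succ k ih =>
      rw [pow_succ, pow_succ, ih]
      calc w * A ^ k * star w * (w * A * star w)
          = w * A ^ k * (star w * w) * A * star w := by
            simp only [Matrix.mul_assoc]
        _ = w * (A ^ k * A) * star w := by rw [h1]; simp only [Matrix.mul_one, Matrix.mul_assoc]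

lemma aeval_conj' {w A : Matrix n n ℂ} (h1 : star w * w = 1) (h2 : w * star w = 1) (p : ℂ[X]) :
    aeval (w * A * star w) p = w * aeval A p * star w := by
  induction p using Polynomial.induction_on' with
  | add p q hp hq => simp [map_add, hp, hq, Matrix.mul_add, Matrix.add_mul]
  | monomial k a =>
      simp [aeval_monomial, conj_pow' h1 h2, Algebra.algebraMap_eq_smul_one,
        smul_mul_assoc, mul_smul_comm, Matrix.smul_mul, Matrix.mul_smul]

lemma aeval_diag (d : n → ℂ) (p : ℂ[X]) :
    aeval (diagonal d) p = diagonal (fun i => aeval (d i) p) := by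
  have h := Polynomial.aeval_algHom_apply (Matrix.diagonalAlgHom (n := n) (α := ℂ) ℂ) d p
  simp only [Matrix.diagonalAlgHom_apply] at h
  have h2 : ((aeval d) p) = fun i => (aeval (d i)) p :=
    funext fun i => (Polynomial.aeval_algHom_apply (Pi.evalAlgHom ℂ (fun _ => ℂ) i) d p).symm
  rw [h, h2]

lemma funcalc_welldef {w v : Matrix n n ℂ}
    (hw1 : star w * w = 1) (hw2 : w * star w = 1)
    (hv1 : star v * v = 1) (hv2 : v * star v = 1)
    (c e : n → ℝ) (f : ℝ → ℝ)
    (h : w * diagonal (fun i => (c i : ℂ)) * star w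
       = v * diagonal (fun i => (e i : ℂ)) * star v) :
    w * diagonal (fun i => ((f (c i) : ℝ) : ℂ)) * star w
      = v * diagonal (fun i => ((f (e i) : ℝ) : ℂ)) * star v := by
  obtain ⟨p, hp⟩ := exists_interp
    (Finset.image c Finset.univ ∪ Finset.image e Finset.univ) f
  set P : ℂ[X] := p.map (algebraMap ℝ ℂ) with hP
  have key : ∀ x : ℝ,
      x ∈ Finset.image c Finset.univ ∪ Finset.image e Finset.univ →
      aeval ((x : ℝ) : ℂ) P = ((f x : ℝ) : ℂ) := by
    intro x hx
    rw [hP, Polynomial.aeval_map_algebraMap]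
    have : ((x : ℝ) : ℂ) = algebraMap ℝ ℂ x := rfl
    rw [this, Polynomial.aeval_algebraMap_apply]
    simp [hp x hx]
  have hc : ∀ i, aeval ((c i : ℝ) : ℂ) P = ((f (c i) : ℝ) : ℂ) := fun i =>
    key (c i) (Finset.mem_union_left _ (Finset.mem_image_of_mem c (Finset.mem_univ i)))
  have he : ∀ i, aeval ((e i : ℝ) : ℂ) P = ((f (e i) : ℝ) : ℂ) := fun i =>
    key (e i) (Finset.mem_union_right _ (Finset.mem_image_of_mem e (Finset.mem_univ i)))
  calc w * diagonal (fun i => ((f (c i) : ℝ) : ℂ)) * star w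
      = w * aeval (diagonal (fun i => (c i : ℂ))) P * star w := by
        rw [aeval_diag]; simp_rw [hc]
    _ = aeval (w * diagonal (fun i => (c i : ℂ)) * star w) P := (aeval_conj' hw1 hw2 P).symm
    _ = aeval (v * diagonal (fun i => (e i : ℂ)) * star v) P := by rw [h]
    _ = v * aeval (diagonal (fun i => (e i : ℂ))) P * star v := aeval_conj' hv1 hv2 P
    _ = v * diagonal (fun i => ((f (e i) : ℝ) : ℂ)) * star v := by
        rw [aeval_diag]; simp_rw [he]

lemma key_scalar (a m : ℝ) (ha : 0 ≤ a) :
    0 ≤ a * Real.log a - a * m - a + Real.exp m ∧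
    (a * Real.log a - a * m - a + Real.exp m = 0 → a = Real.exp m) := by
  rcases eq_or_lt_of_le ha with h0 | h0
  · constructor
    · simp [← h0]
      positivity
    · intro h
      simp [← h0, (Real.exp_pos m).ne'] at h
  · set b := Real.exp m with hb
    have hbpos : 0 < b := Real.exp_pos m
    have hm : m = Real.log b := by rw [hb, Real.log_exp]
    have hlog : Real.log (b / a) ≤ b / a - 1 := Real.log_le_sub_one_of_pos (by positivity)
    have hsplit : Real.log (b / a) = Real.log b - Real.log a := Real.log_div (ne_of_gt hbpos) (ne_of_gt h0)
    have hineq : a * (Real.log b - Real.log a) ≤ b - a := by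
      have := mul_le_mul_of_nonneg_left hlog (le_of_lt h0)
      rw [hsplit] at this
      calc a * (Real.log b - Real.log a) ≤ a * (b / a - 1) := by rw [← hsplit]; exact mul_le_mul_of_nonneg_left hlog (le_of_lt h0)
        _ = b - a := by field_simp
    constructor
    · rw [hm]; nlinarith [hineq]
    · intro h
      by_contra hne
      have hba : b / a ≠ 1 := by
        intro h1
        exact hne (by field_simp at h1; linarith)
      have hstrict : Real.log (b / a) < b / a - 1 := Real.log_lt_sub_one_of_pos (by positivity) hba
      have : a * (Real.log b - Real.log a) < b - a := by
        calc a * (Real.log b - Real.log a) = a * Real.log (b / a) := by rw [hsplit]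
          _ < a * (b / a - 1) := by exact mul_lt_mul_of_pos_left hstrict h0
          _ = b - a := by field_simp
      rw [hm] at h
      nlinarith

lemma trace_conj_unitary {v : Matrix n n ℂ} (hv1 : star v * v = 1) (A : Matrix n n ℂ) :
    Matrix.trace (v * A * star v) = Matrix.trace A := by
  rw [Matrix.trace_mul_comm, ← Matrix.mul_assoc, hv1, Matrix.one_mul]

lemma trace_diag_mul_conj (α β : n → ℂ) (M : Matrix n n ℂ) :
    Matrix.trace (diagonal α * M * diagonal β * star M)
      = ∑ i, ∑ j, α i * β j * (M i j * (starRingEnd ℂ) (M i j)) := by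
  rw [Matrix.trace]
  congr 1
  funext i
  rw [Matrix.diag_apply, Matrix.mul_apply]
  congr 1
  funext j
  rw [Matrix.mul_diagonal, Matrix.diagonal_mul, Matrix.star_eq_conjTranspose,
    Matrix.conjTranspose_apply]
  simp [Complex.star_def]
  ring

lemma entSum_eq_trace {A : Matrix n n ℂ} (hA : A.IsHermitian) :
    entSum hA = (Matrix.trace (A * matLog hA)).re := by
  set V : Matrix n n ℂ := (hA.eigenvectorUnitary : Matrix n n ℂ) with hVdef
  have hV1 : star V * V = 1 := hA.eigenvectorUnitary.2.1
  have step : A * matLog hA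
      = V * (diagonal (RCLike.ofReal ∘ hA.eigenvalues)
          * diagonal (fun i => (Real.log (hA.eigenvalues i) : ℂ))) * star V := by
    calc A * matLog hA
        = (V * diagonal (RCLike.ofReal ∘ hA.eigenvalues) * star V)
          * (V * diagonal (fun i => (Real.log (hA.eigenvalues i) : ℂ)) * star V) := by
          congr 1
          exact hA.spectral_theorem
      _ = _ := by
          simp only [Matrix.mul_assoc]
          rw [← Matrix.mul_assoc (star V) V, hV1, Matrix.one_mul]
  rw [step, trace_conj_unitary hV1, Matrix.diagonal_mul_diagonal, Matrix.trace_diagonal,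
    entSum, Complex.re_sum]
  refine Finset.sum_congr rfl fun i _ => ?_
  simp [Complex.ofReal_mul]

end Aux

/-- `ρ ↦ Tr(ρ log ρ) − Tr(ρ Δ̃)` over PSD matrices attains its unique
minimum at `ρ = exp(Δ̃ − I)`. -/
theorem stmt0 {n : Type*} [Fintype n] [DecidableEq n]
    (Δ : Matrix n n ℂ) (hΔ : Δ.IsHermitian) :
    ∃ hexp : (NormedSpace.exp (Δ - 1)).IsHermitian,
      (NormedSpace.exp (Δ - 1)).PosSemidef ∧
      ∀ (ρ : Matrix n n ℂ) (hρ : ρ.PosSemidef),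
        obj Δ hexp ≤ obj Δ hρ.1 ∧
        (obj Δ hρ.1 = obj Δ hexp → ρ = NormedSpace.exp (Δ - 1)) := by
  classical
  have hΔ' : (Δ - 1).IsHermitian := hΔ.sub Matrix.isHermitian_one
  set W : Matrix n n ℂ := (hΔ'.eigenvectorUnitary : Matrix n n ℂ) with hWdef
  have hW1 : star W * W = 1 := hΔ'.eigenvectorUnitary.2.1
  have hW2 : W * star W = 1 := hΔ'.eigenvectorUnitary.2.2
  set μ : n → ℝ := hΔ'.eigenvalues with hμdef
  have hspec : Δ - 1 = W * diagonal (fun i => (μ i : ℂ)) * star W := hΔ'.spectral_theorem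
  have hσW : NormedSpace.exp (Δ - 1)
      = W * diagonal (fun i => ((Real.exp (μ i) : ℝ) : ℂ)) * star W := by
    have hU : IsUnit W := ⟨⟨W, star W, hW2, hW1⟩, rfl⟩
    have hinv : W⁻¹ = star W := Matrix.inv_eq_right_inv hW2
    rw [hspec, ← hinv, Matrix.exp_conj W _ hU, Matrix.exp_diagonal, hinv]
    have hfun : NormedSpace.exp (fun i => ((μ i : ℝ) : ℂ))
        = fun i => ((Real.exp (μ i) : ℝ) : ℂ) := by
      rw [Pi.exp_def]
      funext i
      rw [← Complex.exp_eq_exp_ℂ, Complex.ofReal_exp]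
    rw [hfun]
  have hexp : (NormedSpace.exp (Δ - 1)).IsHermitian := by
    rw [Matrix.IsHermitian, ← Matrix.exp_conjTranspose, hΔ'.eq]
  have hpsd : (NormedSpace.exp (Δ - 1)).PosSemidef := by
    rw [hσW, Matrix.star_eq_conjTranspose]
    refine Matrix.PosSemidef.mul_mul_conjTranspose_same ?_ W
    refine Matrix.posSemidef_diagonal_iff.mpr fun i => ?_
    exact_mod_cast (Real.exp_pos (μ i)).le
  refine ⟨hexp, hpsd, fun ρ hρ => ?_⟩
  -- matLog of σ is Δ - 1
  set V : Matrix n n ℂ := (hexp.eigenvectorUnitary : Matrix n n ℂ) with hVdef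
  have hV1 : star V * V = 1 := hexp.eigenvectorUnitary.2.1
  have hV2 : V * star V = 1 := hexp.eigenvectorUnitary.2.2
  have hspecσ : NormedSpace.exp (Δ - 1)
      = V * diagonal (fun i => ((hexp.eigenvalues i : ℝ) : ℂ)) * star V :=
    hexp.spectral_theorem
  have hlog : matLog hexp = Δ - 1 := by
    have hwd := funcalc_welldef hW1 hW2 hV1 hV2 (fun i => Real.exp (μ i)) hexp.eigenvalues
      Real.log (by rw [← hσW]; exact hspecσ)
    have hl : (fun i => ((Real.log (Real.exp (μ i)) : ℝ) : ℂ)) = fun i => ((μ i : ℝ) : ℂ) := by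
      funext i; rw [Real.log_exp]
    rw [hl] at hwd
    show V * diagonal (fun i => ((Real.log (hexp.eigenvalues i) : ℝ) : ℂ)) * star V = Δ - 1
    rw [← hwd, ← hspec]
  -- value of the objective at σ
  have htrσ : (Matrix.trace (NormedSpace.exp (Δ - 1))).re = ∑ j, Real.exp (μ j) := by
    rw [hσW, trace_conj_unitary hW1, Matrix.trace_diagonal, Complex.re_sum]
    simp [← Complex.ofReal_exp]
  have hobjσ : obj Δ hexp = -∑ j, Real.exp (μ j) := by
    rw [obj, entSum_eq_trace hexp, hlog]
    have hms : NormedSpace.exp (Δ - 1) * (Δ - 1)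
        = NormedSpace.exp (Δ - 1) * Δ - NormedSpace.exp (Δ - 1) := by
      rw [Matrix.mul_sub, Matrix.mul_one]
    rw [hms, Matrix.trace_sub, Complex.sub_re, htrσ]
    ring
  -- decomposition of ρ
  set U : Matrix n n ℂ := (hρ.1.eigenvectorUnitary : Matrix n n ℂ) with hUdef
  have hU1 : star U * U = 1 := hρ.1.eigenvectorUnitary.2.1
  have hU2 : U * star U = 1 := hρ.1.eigenvectorUnitary.2.2
  set a : n → ℝ := hρ.1.eigenvalues with hadef
  have ha : ∀ i, 0 ≤ a i := fun i => hρ.eigenvalues_nonneg i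
  have hρspec : ρ = U * diagonal (fun i => ((a i : ℝ) : ℂ)) * star U := hρ.1.spectral_theorem
  set M : Matrix n n ℂ := star U * W with hMdef
  have hstarM : star M = star W * U := by rw [hMdef, StarMul.star_mul, star_star]
  have hM2 : M * star M = 1 := by
    rw [hMdef, hstarM, Matrix.mul_assoc, ← Matrix.mul_assoc W (star W) U, hW2,
      Matrix.one_mul, hU1]
  have hM1 : star M * M = 1 := by
    rw [hMdef, hstarM, Matrix.mul_assoc, ← Matrix.mul_assoc U (star U) W, hU2,
      Matrix.one_mul, hW1]
  set P : n → n → ℝ := fun i j => Complex.normSq (M i j) with hPdef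
  have hProw : ∀ i, ∑ j, P i j = 1 := by
    intro i
    have h := congrFun (congrFun hM2 i) i
    simp only [Matrix.mul_apply, Matrix.star_eq_conjTranspose, Matrix.conjTranspose_apply,
      Complex.star_def, Complex.mul_conj, Matrix.one_apply_eq] at h
    have := congrArg Complex.re h
    rw [Complex.re_sum] at this
    simpa using this
  have hPcol : ∀ j, ∑ i, P i j = 1 := by
    intro j
    have h := congrFun (congrFun hM1 j) j
    simp only [Matrix.mul_apply, Matrix.star_eq_conjTranspose, Matrix.conjTranspose_apply,
      Complex.star_def, Matrix.one_apply_eq] at h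
    have h2 : ∑ i, ((Complex.normSq (M i j) : ℝ) : ℂ) = 1 := by
      rw [← h]
      refine Finset.sum_congr rfl fun i _ => ?_
      rw [mul_comm, Complex.mul_conj]
    have := congrArg Complex.re h2
    rw [Complex.re_sum] at this
    simpa using this
  -- trace of ρ(Δ-1)
  have hiden : U * (diagonal (fun i => ((a i : ℝ) : ℂ)) * M
        * diagonal (fun i => ((μ i : ℝ) : ℂ)) * star M) * star U
      = U * diagonal (fun i => ((a i : ℝ) : ℂ)) * star U
        * (W * diagonal (fun i => ((μ i : ℝ) : ℂ)) * star W) := by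
    rw [hstarM, hMdef]
    simp only [Matrix.mul_assoc]
    rw [hU2, Matrix.mul_one]
  have htr1 : (Matrix.trace (ρ * (Δ - 1))).re = ∑ i, ∑ j, a i * μ j * P i j := by
    rw [hρspec, hspec, ← hiden, trace_conj_unitary hU1, trace_diag_mul_conj, Complex.re_sum]
    refine Finset.sum_congr rfl fun i _ => ?_
    rw [Complex.re_sum]
    refine Finset.sum_congr rfl fun j _ => ?_
    rw [Complex.mul_conj]
    simp [hPdef]
  have htr2 : (Matrix.trace ρ).re = ∑ i, a i := by
    rw [hρspec, trace_conj_unitary hU1, Matrix.trace_diagonal, Complex.re_sum]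
    simp
  -- the difference as a double sum
  set g : n → n → ℝ := fun i j =>
    a i * Real.log (a i) - a i * μ j - a i + Real.exp (μ j) with hgdef
  have hdiff : obj Δ hρ.1 - obj Δ hexp = ∑ i, ∑ j, P i j * g i j := by
    have h1 : obj Δ hρ.1 = (∑ i, a i * Real.log (a i))
        - (∑ i, ∑ j, a i * μ j * P i j) - ∑ i, a i := by
      rw [obj]
      have hρΔ : ρ * Δ = ρ * (Δ - 1) + ρ := by
        rw [Matrix.mul_sub, Matrix.mul_one, sub_add_cancel]
      rw [hρΔ, Matrix.trace_add, Complex.add_re, htr1, htr2]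
      have he : entSum hρ.1 = ∑ i, a i * Real.log (a i) := rfl
      rw [he]
      ring
    rw [h1, hobjσ]
    have e1 : ∑ i, a i * Real.log (a i) = ∑ i, ∑ j, P i j * (a i * Real.log (a i)) := by
      refine Finset.sum_congr rfl fun i _ => ?_
      rw [← Finset.sum_mul, hProw i, one_mul]
    have e2 : ∑ i, a i = ∑ i, ∑ j, P i j * a i := by
      refine Finset.sum_congr rfl fun i _ => ?_
      rw [← Finset.sum_mul, hProw i, one_mul]
    have e3 : ∑ j, Real.exp (μ j) = ∑ i, ∑ j, P i j * Real.exp (μ j) := by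
      rw [Finset.sum_comm]
      refine Finset.sum_congr rfl fun j _ => ?_
      rw [← Finset.sum_mul, hPcol j, one_mul]
    have e4 : ∑ i, ∑ j, a i * μ j * P i j = ∑ i, ∑ j, P i j * (a i * μ j) := by
      refine Finset.sum_congr rfl fun i _ => Finset.sum_congr rfl fun j _ => by ring
    rw [e1, e2, e3, e4]
    rw [sub_neg_eq_add]
    simp only [← Finset.sum_sub_distrib, ← Finset.sum_add_distrib]
    refine Finset.sum_congr rfl fun i _ => Finset.sum_congr rfl fun j _ => ?_
    rw [hgdef]
    ring
  have hterm : ∀ i j, 0 ≤ P i j * g i j := fun i j =>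
    mul_nonneg (Complex.normSq_nonneg _) ((key_scalar (a i) (μ j) (ha i)).1)
  have hge : 0 ≤ obj Δ hρ.1 - obj Δ hexp := by
    rw [hdiff]
    exact Finset.sum_nonneg fun i _ => Finset.sum_nonneg fun j _ => hterm i j
  constructor
  · linarith
  · intro heq
    have hzero : ∑ i, ∑ j, P i j * g i j = 0 := by rw [← hdiff]; linarith
    have hall : ∀ i j, P i j * g i j = 0 := by
      intro i j
      have h1 := (Finset.sum_eq_zero_iff_of_nonneg
        (fun i _ => Finset.sum_nonneg fun j _ => hterm i j)).mp hzero i (Finset.mem_univ i)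
      exact (Finset.sum_eq_zero_iff_of_nonneg (fun j _ => hterm i j)).mp h1 j (Finset.mem_univ j)
    have hMij : ∀ i j, M i j * (((a i : ℝ) : ℂ) - ((Real.exp (μ j) : ℝ) : ℂ)) = 0 := by
      intro i j
      rcases mul_eq_zero.mp (hall i j) with hP | hgz
      · rw [Complex.normSq_eq_zero.mp hP, zero_mul]
      · have hae : a i = Real.exp (μ j) := (key_scalar (a i) (μ j) (ha i)).2 hgz
        rw [hae, sub_self, mul_zero]
    have hcomm : diagonal (fun i => ((a i : ℝ) : ℂ)) * M
        = M * diagonal (fun j => ((Real.exp (μ j) : ℝ) : ℂ)) := by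
      ext i j
      rw [Matrix.diagonal_mul, Matrix.mul_diagonal]
      linear_combination hMij i j
    have hWU : U * M = W := by rw [hMdef, ← Matrix.mul_assoc, hU2, Matrix.one_mul]
    have hUM : star U = M * star W := by
      rw [hMdef, Matrix.mul_assoc, hW2, Matrix.mul_one]
    calc ρ = U * diagonal (fun i => ((a i : ℝ) : ℂ)) * star U := hρspec
      _ = U * diagonal (fun i => ((a i : ℝ) : ℂ)) * (M * star W) := by rw [← hUM]
      _ = U * (diagonal (fun i => ((a i : ℝ) : ℂ)) * M) * star W := by
          simp only [Matrix.mul_assoc]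
      _ = U * (M * diagonal (fun j => ((Real.exp (μ j) : ℝ) : ℂ))) * star W := by rw [hcomm]
      _ = (U * M) * diagonal (fun j => ((Real.exp (μ j) : ℝ) : ℂ)) * star W := by
          simp only [Matrix.mul_assoc]
      _ = W * diagonal (fun j => ((Real.exp (μ j) : ℝ) : ℂ)) * star W := by rw [hWU]
      _ = NormedSpace.exp (Δ - 1) := hσW.symm
end

section
/- Let Δ̃ be an n×n Hermitian matrix. The minimum value of Tr(ρ log ρ) − Tr(ρ Δ̃) over positive semi-definite n×n matrices ρ equals −(1/e) · Tr(exp(Δ̃)). -/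
open Matrix Kronecker
open scoped ComplexOrder

section auxlemmas

set_option linter.unusedSectionVars false

variable {n : Type*} [Fintype n] [DecidableEq n]

private lemma scalar_lb {q d : ℝ} (hq : 0 ≤ q) :
    -Real.exp (d - 1) ≤ q * Real.log q - q * d := by
  rcases hq.eq_or_lt with h | h
  · simp only [← h, zero_mul, sub_zero]
    linarith [Real.exp_pos (d - 1)]
  · have h1 : (d - 1 - Real.log q) + 1 ≤ Real.exp (d - 1 - Real.log q) :=
      Real.add_one_le_exp _
    have h2 : q * Real.exp (d - 1 - Real.log q) = Real.exp (d - 1) := by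
      rw [show q * Real.exp (d - 1 - Real.log q)
          = Real.exp (Real.log q) * Real.exp (d - 1 - Real.log q) by rw [Real.exp_log h],
        ← Real.exp_add]
      ring_nf
    nlinarith [mul_le_mul_of_nonneg_left h1 hq]

private lemma dstoch_sum (μ : n → ℝ) (hμ : ∀ i, 0 ≤ μ i) (p : n → n → ℝ)
    (hp : ∀ j i, 0 ≤ p j i) (hrow : ∀ j, ∑ i, p j i = 1) (hcol : ∀ i, ∑ j, p j i = 1) :
    ∑ j, (∑ i, p j i * μ i) * Real.log (∑ i, p j i * μ i)
      ≤ ∑ i, μ i * Real.log (μ i) := by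
  have jensen : ∀ j, (∑ i, p j i * μ i) * Real.log (∑ i, p j i * μ i)
      ≤ ∑ i, p j i * (μ i * Real.log (μ i)) := fun j => by
    have := Real.convexOn_mul_log.map_sum_le (t := Finset.univ) (w := p j) (p := μ)
      (fun i _ => hp j i) (hrow j) (fun i _ => hμ i)
    simpa [smul_eq_mul] using this
  calc ∑ j, (∑ i, p j i * μ i) * Real.log (∑ i, p j i * μ i)
      ≤ ∑ j, ∑ i, p j i * (μ i * Real.log (μ i)) := Finset.sum_le_sum fun j _ => jensen j
    _ = ∑ i, (∑ j, p j i) * (μ i * Real.log (μ i)) := by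
        rw [Finset.sum_comm]; simp [Finset.sum_mul]
    _ = ∑ i, μ i * Real.log (μ i) := by simp [hcol]

private lemma conj_entry_re {M : Matrix n n ℂ} (μ : n → ℝ) (j : n) :
    ((M * Matrix.diagonal (fun i => (μ i : ℂ)) * star M) j j).re
      = ∑ i, Complex.normSq (M j i) * μ i := by
  have h : (M * Matrix.diagonal (fun i => (μ i : ℂ)) * star M) j j
      = ∑ i, M j i * (μ i : ℂ) * (starRingEnd ℂ) (M j i) := by
    rw [Matrix.mul_apply]
    simp [Matrix.mul_diagonal, Matrix.star_apply, Matrix.conjTranspose_apply]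
  rw [h, Complex.re_sum]
  refine Finset.sum_congr rfl fun i _ => ?_
  have : M j i * (μ i : ℂ) * (starRingEnd ℂ) (M j i)
      = ((Complex.normSq (M j i) * μ i : ℝ) : ℂ) := by
    push_cast
    rw [← Complex.mul_conj]; ring
  rw [this, Complex.ofReal_re]

private lemma normSq_row_sum {M : Matrix n n ℂ} (hM : M * star M = 1) (j : n) :
    ∑ i, Complex.normSq (M j i) = 1 := by
  have h1 : (M * star M) j j = 1 := by rw [hM]; simp [Matrix.one_apply]
  have h2 : (M * star M) j j = ((∑ i, Complex.normSq (M j i) : ℝ) : ℂ) := by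
    push_cast
    simp [Matrix.mul_apply, Matrix.star_apply, Matrix.conjTranspose_apply, Complex.mul_conj]
  rw [h2] at h1
  exact_mod_cast h1

private lemma normSq_col_sum {M : Matrix n n ℂ} (hM : star M * M = 1) (i : n) :
    ∑ j, Complex.normSq (M j i) = 1 := by
  have h1 : (star M * M) i i = 1 := by rw [hM]; simp [Matrix.one_apply]
  have h2 : (star M * M) i i = ((∑ j, Complex.normSq (M j i) : ℝ) : ℂ) := by
    push_cast
    simp [Matrix.mul_apply, Matrix.star_apply, Matrix.conjTranspose_apply, Complex.mul_conj,
      mul_comm]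
  rw [h2] at h1
  exact_mod_cast h1

/-- Key majorization / Jensen bound: the "diagonal pinching" of a matrix
`A = U diag(μ) U⋆` in any orthonormal basis `W` has smaller entropy sum. -/
private lemma ent_bound {A U W : Matrix n n ℂ} (μ : n → ℝ) (hμ : ∀ i, 0 ≤ μ i)
    (hU : U ∈ Matrix.unitaryGroup n ℂ) (hW : W ∈ Matrix.unitaryGroup n ℂ)
    (hA : A = U * Matrix.diagonal (fun i => (μ i : ℂ)) * star U) :
    ∑ j, ((star W * A * W) j j).re * Real.log (((star W * A * W) j j).re)
      ≤ ∑ i, μ i * Real.log (μ i) := by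
  set M : Matrix n n ℂ := star W * U with hMdef
  have hsM : star M = star U * W := by rw [hMdef, Matrix.star_mul, star_star]
  have hM1 : M * star M = 1 := by
    rw [hMdef, hsM, Matrix.mul_assoc, ← Matrix.mul_assoc U (star U) W,
      Matrix.mem_unitaryGroup_iff.mp hU, Matrix.one_mul, Matrix.mem_unitaryGroup_iff'.mp hW]
  have hM2 : star M * M = 1 := by
    rw [hMdef, hsM, Matrix.mul_assoc, ← Matrix.mul_assoc W (star W) U,
      Matrix.mem_unitaryGroup_iff.mp hW, Matrix.one_mul, Matrix.mem_unitaryGroup_iff'.mp hU]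
  have hconj : star W * A * W = M * Matrix.diagonal (fun i => (μ i : ℂ)) * star M := by
    rw [hA, hsM, hMdef]
    simp only [Matrix.mul_assoc]
  have hentry : ∀ j, ((star W * A * W) j j).re = ∑ i, Complex.normSq (M j i) * μ i := by
    intro j; rw [hconj]; exact conj_entry_re μ j
  calc ∑ j, ((star W * A * W) j j).re * Real.log (((star W * A * W) j j).re)
      = ∑ j, (∑ i, Complex.normSq (M j i) * μ i)
          * Real.log (∑ i, Complex.normSq (M j i) * μ i) := by
        refine Finset.sum_congr rfl fun j _ => by rw [hentry j]
    _ ≤ ∑ i, μ i * Real.log (μ i) :=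
        dstoch_sum μ hμ (fun j i => Complex.normSq (M j i))
          (fun j i => Complex.normSq_nonneg _)
          (fun j => normSq_row_sum hM1 j) (fun i => normSq_col_sum hM2 i)

private lemma psd_of_conj_diag {U : Matrix n n ℂ} (μ : n → ℝ) (hμ : ∀ i, 0 ≤ μ i)
    (hU : U ∈ Matrix.unitaryGroup n ℂ) :
    (U * Matrix.diagonal (fun i => (μ i : ℂ)) * star U).PosSemidef := by
  have hd : (Matrix.diagonal (fun i => (μ i : ℂ))).PosSemidef :=
    Matrix.posSemidef_diagonal_iff.mpr fun i => by
      exact_mod_cast Complex.zero_le_real.mpr (hμ i)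
  simpa [Matrix.star_eq_conjTranspose] using hd.mul_mul_conjTranspose_same U

private lemma spectral_theorem' {A : Matrix n n ℂ} (hA : A.IsHermitian) :
    A = (hA.eigenvectorUnitary : Matrix n n ℂ)
        * Matrix.diagonal (fun i => (hA.eigenvalues i : ℂ))
        * star (hA.eigenvectorUnitary : Matrix n n ℂ) := by
  exact hA.spectral_theorem

private lemma star_conj_diag {U : Matrix n n ℂ} (hU : U ∈ Matrix.unitaryGroup n ℂ)
    (v : n → ℂ) :
    star U * (U * Matrix.diagonal v * star U) * U = Matrix.diagonal v := by
  simp only [← Matrix.mul_assoc]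
  rw [Matrix.mem_unitaryGroup_iff'.mp hU, Matrix.one_mul, Matrix.mul_assoc,
    Matrix.mem_unitaryGroup_iff'.mp hU, Matrix.mul_one]

private lemma sum_of_diag_form {A V : Matrix n n ℂ} (ν : n → ℝ)
    (hd : star V * A * V = Matrix.diagonal (fun i => (ν i : ℂ))) :
    ∑ j, ((star V * A * V) j j).re * Real.log (((star V * A * V) j j).re)
      = ∑ i, ν i * Real.log (ν i) := by
  refine Finset.sum_congr rfl fun j _ => ?_
  rw [hd]
  simp [Matrix.diagonal_apply_eq]

/-- The entropy sum only depends on the (multiset of) eigenvalues: it can be computed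
from any unitary diagonalization with nonnegative entries. -/
private lemma ent_eq {A U : Matrix n n ℂ} (μ : n → ℝ) (hμ : ∀ i, 0 ≤ μ i)
    (hU : U ∈ Matrix.unitaryGroup n ℂ)
    (hA : A = U * Matrix.diagonal (fun i => (μ i : ℂ)) * star U) (hAh : A.IsHermitian) :
    ∑ i, hAh.eigenvalues i * Real.log (hAh.eigenvalues i) = ∑ i, μ i * Real.log (μ i) := by
  have hpsd : A.PosSemidef := hA ▸ psd_of_conj_diag μ hμ hU
  have hVmem : (hAh.eigenvectorUnitary : Matrix n n ℂ) ∈ Matrix.unitaryGroup n ℂ :=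
    hAh.eigenvectorUnitary.2
  have hdiagV : star (hAh.eigenvectorUnitary : Matrix n n ℂ) * A
      * (hAh.eigenvectorUnitary : Matrix n n ℂ)
      = Matrix.diagonal (fun i => (hAh.eigenvalues i : ℂ)) := by
    have := hAh.conjStarAlgAut_star_eigenvectorUnitary
    rw [Unitary.conjStarAlgAut_star_apply] at this
    exact this
  have hdiagU : star U * A * U = Matrix.diagonal (fun i => (μ i : ℂ)) := by
    conv_lhs => rw [hA]
    exact star_conj_diag hU _
  apply le_antisymm
  · have h := ent_bound μ hμ hU hVmem hA
    rwa [sum_of_diag_form hAh.eigenvalues hdiagV] at h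
  · have h := ent_bound hAh.eigenvalues (hpsd.eigenvalues_nonneg) hVmem hU
      (spectral_theorem' hAh)
    rwa [sum_of_diag_form μ hdiagU] at h

private lemma psd_diag_re_nonneg {B : Matrix n n ℂ} (hB : B.PosSemidef) (j : n) :
    0 ≤ (B j j).re := by
  have h : 0 ≤ dotProduct (star (Pi.single j 1 : n → ℂ)) (B *ᵥ (Pi.single j 1)) :=
    hB.dotProduct_mulVec_nonneg _
  have h2 : dotProduct (star (Pi.single j 1 : n → ℂ)) (B *ᵥ (Pi.single j 1)) = B j j := by
    simp [dotProduct, Matrix.mulVec, Pi.single_apply, Finset.mul_sum]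
  rw [h2] at h
  simpa using (Complex.le_def.mp h).1

private lemma trace_conj_diag (U : Matrix n n ℂ) (hU2 : star U * U = 1) (v : n → ℂ) :
    Matrix.trace (U * Matrix.diagonal v * star U) = ∑ i, v i := by
  rw [Matrix.trace_mul_cycle, hU2, Matrix.one_mul]
  simp [Matrix.trace, Matrix.diag]

private lemma conj_diag_mul {U : Matrix n n ℂ} (hU2 : star U * U = 1) (v w : n → ℂ) :
    (U * Matrix.diagonal v * star U) * (U * Matrix.diagonal w * star U)
      = U * Matrix.diagonal (fun i => v i * w i) * star U := by
  have h : star U * (U * Matrix.diagonal w * star U) = Matrix.diagonal w * star U := by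
    rw [← Matrix.mul_assoc, ← Matrix.mul_assoc, hU2, Matrix.one_mul]
  calc (U * Matrix.diagonal v * star U) * (U * Matrix.diagonal w * star U)
      = (U * Matrix.diagonal v) * (star U * (U * Matrix.diagonal w * star U)) := by
        rw [Matrix.mul_assoc]
    _ = (U * Matrix.diagonal v) * (Matrix.diagonal w * star U) := by rw [h]
    _ = U * (Matrix.diagonal v * Matrix.diagonal w) * star U := by
        simp only [Matrix.mul_assoc]
    _ = U * Matrix.diagonal (fun i => v i * w i) * star U := by
        rw [Matrix.diagonal_mul_diagonal]

end auxlemmas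

/-- the minimum value of `Tr(ρ log ρ) − Tr(ρ Δ̃)` over PSD `ρ` is
`−(1/e) Tr(exp Δ̃)`. -/
theorem stmt1 {n : Type*} [Fintype n] [DecidableEq n]
    (Δ : Matrix n n ℂ) (hΔ : Δ.IsHermitian) :
    IsLeast {x : ℝ | ∃ (ρ : Matrix n n ℂ) (hρ : ρ.PosSemidef), x = obj Δ hρ.1}
      (-(1 / Real.exp 1) * (Matrix.trace (NormedSpace.exp Δ)).re) := by
  classical
  obtain ⟨Uc, hUmem, d, hΔd⟩ :
      ∃ (Uc : Matrix n n ℂ) (_ : Uc ∈ Matrix.unitaryGroup n ℂ) (d : n → ℝ),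
        Δ = Uc * Matrix.diagonal (fun i => (d i : ℂ)) * star Uc :=
    ⟨hΔ.eigenvectorUnitary, hΔ.eigenvectorUnitary.2, hΔ.eigenvalues, spectral_theorem' hΔ⟩
  have hU1 : Uc * star Uc = 1 := Matrix.mem_unitaryGroup_iff.mp hUmem
  have hU2 : star Uc * Uc = 1 := Matrix.mem_unitaryGroup_iff'.mp hUmem
  -- the exponential of Δ
  have hexp : NormedSpace.exp Δ
      = Uc * Matrix.diagonal (fun i => ((Real.exp (d i) : ℝ) : ℂ)) * star Uc := by
    have hinv : Uc⁻¹ = star Uc := Matrix.inv_eq_left_inv hU2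
    have hunit : IsUnit Uc := @isUnit_of_invertible _ _ Uc (invertibleOfRightInverse Uc (star Uc) hU1)
    have hfun : (NormedSpace.exp fun i => ((d i : ℝ) : ℂ)) = fun i => ((Real.exp (d i) : ℝ) : ℂ) := by
      funext i
      rw [Pi.coe_exp, ← Complex.exp_eq_exp_ℂ, Complex.ofReal_exp]
    rw [hΔd, ← hinv, Matrix.exp_conj _ _ hunit, Matrix.exp_diagonal, hfun, hinv]
  have htr_exp : (Matrix.trace (NormedSpace.exp Δ)).re = ∑ i, Real.exp (d i) := by
    rw [hexp, trace_conj_diag Uc hU2, Complex.re_sum]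
    simp only [Complex.ofReal_re]
  have hval : -(1 / Real.exp 1) * (Matrix.trace (NormedSpace.exp Δ)).re
      = ∑ i, -Real.exp (d i - 1) := by
    rw [htr_exp, Finset.mul_sum]
    refine Finset.sum_congr rfl fun i _ => ?_
    rw [Real.exp_sub]
    ring
  constructor
  · -- membership: the witness ρ₀ = exp(Δ − 1) = U diag(e^{dᵢ−1}) U⋆
    refine ⟨Uc * Matrix.diagonal (fun i => ((Real.exp (d i - 1) : ℝ) : ℂ)) * star Uc,
      psd_of_conj_diag _ (fun i => (Real.exp_pos _).le) hUmem, ?_⟩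
    have hent : entSum (psd_of_conj_diag (fun i => Real.exp (d i - 1))
        (fun i => (Real.exp_pos _).le) hUmem).1
        = ∑ i, Real.exp (d i - 1) * (d i - 1) := by
      have h := ent_eq (fun i => Real.exp (d i - 1)) (fun i => (Real.exp_pos _).le) hUmem rfl
        (psd_of_conj_diag (fun i => Real.exp (d i - 1))
          (fun i => (Real.exp_pos _).le) hUmem).1
      simp only [entSum]
      rw [h]
      exact Finset.sum_congr rfl fun i _ => by rw [Real.log_exp]
    have hmul : (Uc * Matrix.diagonal (fun i => ((Real.exp (d i - 1) : ℝ) : ℂ)) * star Uc) * Δ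
        = Uc * Matrix.diagonal (fun i => ((Real.exp (d i - 1) : ℝ) : ℂ) * (d i : ℂ)) * star Uc := by
      conv_lhs => rw [hΔd]
      exact conj_diag_mul hU2 _ _
    have htrρΔ : (Matrix.trace ((Uc * Matrix.diagonal
        (fun i => ((Real.exp (d i - 1) : ℝ) : ℂ)) * star Uc) * Δ)).re
        = ∑ i, Real.exp (d i - 1) * d i := by
      rw [hmul, trace_conj_diag Uc hU2, Complex.re_sum]
      refine Finset.sum_congr rfl fun i _ => ?_
      simp only [← Complex.ofReal_mul, Complex.ofReal_re]
    simp only [obj]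
    rw [hent, htrρΔ, hval, ← Finset.sum_sub_distrib]
    refine Finset.sum_congr rfl fun i _ => by ring
  · -- lower bound
    rintro x ⟨ρ, hρ, rfl⟩
    have hBpsd : (star Uc * ρ * Uc).PosSemidef := by
      have := hρ.conjTranspose_mul_mul_same Uc
      simpa [Matrix.star_eq_conjTranspose] using this
    have hq0 : ∀ j, 0 ≤ ((star Uc * ρ * Uc) j j).re := fun j => psd_diag_re_nonneg hBpsd j
    have htrace : (Matrix.trace (ρ * Δ)).re = ∑ j, ((star Uc * ρ * Uc) j j).re * d j := by
      have h1 : Matrix.trace (ρ * Δ)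
          = Matrix.trace ((star Uc * ρ * Uc) * Matrix.diagonal (fun i => (d i : ℂ))) := by
        rw [hΔd, ← Matrix.mul_assoc, Matrix.trace_mul_cycle]
        simp only [Matrix.mul_assoc]
      have h2 : Matrix.trace ((star Uc * ρ * Uc) * Matrix.diagonal (fun i => (d i : ℂ)))
          = ∑ j, (star Uc * ρ * Uc) j j * (d j : ℂ) := by
        simp [Matrix.trace, Matrix.diag, Matrix.mul_diagonal]
      rw [h1, h2, Complex.re_sum]
      exact Finset.sum_congr rfl fun j _ => by simp [Complex.mul_re]
    have hent : ∑ j, ((star Uc * ρ * Uc) j j).re * Real.log (((star Uc * ρ * Uc) j j).re)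
        ≤ entSum hρ.1 := by
      have h := ent_bound hρ.1.eigenvalues hρ.eigenvalues_nonneg
        hρ.1.eigenvectorUnitary.2 hUmem (spectral_theorem' hρ.1)
      simpa only [entSum] using h
    calc -(1 / Real.exp 1) * (Matrix.trace (NormedSpace.exp Δ)).re
        = ∑ j, -Real.exp (d j - 1) := hval
      _ ≤ ∑ j, (((star Uc * ρ * Uc) j j).re * Real.log (((star Uc * ρ * Uc) j j).re)
            - ((star Uc * ρ * Uc) j j).re * d j) :=
          Finset.sum_le_sum fun j _ => scalar_lb (hq0 j)
      _ = (∑ j, ((star Uc * ρ * Uc) j j).re * Real.log (((star Uc * ρ * Uc) j j).re))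
            - ∑ j, ((star Uc * ρ * Uc) j j).re * d j := Finset.sum_sub_distrib _ _
      _ ≤ entSum hρ.1 - (Matrix.trace (ρ * Δ)).re := by
          rw [htrace]; exact sub_le_sub_right hent _
      _ = obj Δ hρ.1 := rfl
end

section
/- (Klein's inequality) For any two n×n density matrices ρ and σ with supp(ρ) ⊆ supp(σ), the quantum relative entropy S(ρ‖σ) = Tr(ρ log ρ) − Tr(ρ log σ) is nonnegative, with equality if and only if ρ = σ. -/
open Matrix Kronecker
open scoped ComplexOrder

lemma klein_scalar {n : Type*} [Fintype n] (p q : n → ℝ) (P : n → n → ℝ)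
    (hp : ∀ i, 0 ≤ p i) (hq : ∀ j, 0 ≤ q j) (hP : ∀ i j, 0 ≤ P i j)
    (hrow : ∀ i, ∑ j, P i j = 1) (hcol : ∀ j, ∑ i, P i j = 1)
    (hp1 : ∑ i, p i = 1) (hq1 : ∑ j, q j = 1)
    (hs : ∀ i j, p i ≠ 0 → q j = 0 → P i j = 0) :
    0 ≤ (∑ i, p i * Real.log (p i)) - (∑ i, ∑ j, p i * P i j * Real.log (q j)) ∧
    ((∑ i, p i * Real.log (p i)) - (∑ i, ∑ j, p i * P i j * Real.log (q j)) = 0 ↔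
      ∀ i j, P i j ≠ 0 → p i = q j) := by
  set f : n → n → ℝ := fun i j => p i * P i j * (Real.log (p i) - Real.log (q j)) with hf
  set g : n → n → ℝ := fun i j => P i j * (p i - q j) with hg
  have hfg : ∀ i j, g i j ≤ f i j := by
    intro i j
    rcases (hp i).eq_or_lt with hpi | hpi
    · have h1 : f i j = 0 := by simp [hf, ← hpi]
      have := hq j; have := hP i j
      simp only [hg, h1, ← hpi]
      nlinarith
    · rcases (hq j).eq_or_lt with hqj | hqj
      · have h0 : P i j = 0 := hs i j hpi.ne' hqj.symm
        simp [hf, hg, h0]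
      · have key : Real.log (q j) - Real.log (p i) ≤ q j / p i - 1 := by
          rw [← Real.log_div hqj.ne' hpi.ne']
          exact Real.log_le_sub_one_of_pos (div_pos hqj hpi)
        have hqp : q j / p i * p i = q j := div_mul_cancel₀ _ hpi.ne'
        have hP' := hP i j
        simp only [hf, hg]
        nlinarith [mul_le_mul_of_nonneg_right key hpi.le]
  have hsumg : ∑ i, ∑ j, g i j = 0 := by
    have h1 : ∑ i, ∑ j, P i j * p i = 1 := by
      have : ∀ i, ∑ j, P i j * p i = p i := by
        intro i; rw [← Finset.sum_mul, hrow i, one_mul]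
      simp [this, hp1]
    have h2 : ∑ i, ∑ j, P i j * q j = 1 := by
      rw [Finset.sum_comm]
      have : ∀ j, ∑ i, P i j * q j = q j := by
        intro j; rw [← Finset.sum_mul, hcol j, one_mul]
      simp [this, hq1]
    simp only [hg, mul_sub, Finset.sum_sub_distrib, h1, h2, sub_self]
  have hS : (∑ i, p i * Real.log (p i)) - (∑ i, ∑ j, p i * P i j * Real.log (q j))
      = ∑ i, ∑ j, f i j := by
    have h1 : ∀ i, ∑ j, p i * P i j * Real.log (p i) = p i * Real.log (p i) := by
      intro i
      have : ∀ j, p i * P i j * Real.log (p i) = (p i * Real.log (p i)) * P i j := by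
        intro j; ring
      rw [Finset.sum_congr rfl fun j _ => this j, ← Finset.mul_sum, hrow i, mul_one]
    have : ∀ i j, f i j = p i * P i j * Real.log (p i) - p i * P i j * Real.log (q j) := by
      intro i j; simp [hf]; ring
    simp only [this, Finset.sum_sub_distrib, h1]
  have hnonneg : 0 ≤ (∑ i, p i * Real.log (p i)) - (∑ i, ∑ j, p i * P i j * Real.log (q j)) := by
    rw [hS, ← hsumg]
    exact Finset.sum_le_sum fun i _ => Finset.sum_le_sum fun j _ => hfg i j
  refine ⟨hnonneg, ?_, ?_⟩
  · intro h0 i j hPij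
    have hall : ∀ i ∈ Finset.univ, ∀ j ∈ (Finset.univ : Finset n), f i j - g i j = 0 := by
      have hsum0 : ∑ i, ∑ j, (f i j - g i j) = 0 := by
        simp only [Finset.sum_sub_distrib, hsumg, sub_zero, ← hS, h0]
      have hinner : ∀ i ∈ (Finset.univ : Finset n), ∑ j, (f i j - g i j) = 0 := by
        rw [Finset.sum_eq_zero_iff_of_nonneg] at hsum0
        · exact hsum0
        · exact fun i _ => Finset.sum_nonneg fun j _ => sub_nonneg.2 (hfg i j)
      intro i hi
      exact fun j _ => (Finset.sum_eq_zero_iff_of_nonneg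
        (fun j _ => sub_nonneg.2 (hfg i j))).1 (hinner i hi) j (Finset.mem_univ j)
    have heq : f i j = g i j := by
      have := hall i (Finset.mem_univ i) j (Finset.mem_univ j); linarith
    have hPij' : 0 < P i j := (hP i j).lt_of_ne (Ne.symm hPij)
    rcases (hp i).eq_or_lt with hpi | hpi
    · have hf0 : f i j = 0 := by simp [hf, ← hpi]
      have hg0 : g i j = 0 := by rw [← heq, hf0]
      simp only [hg] at hg0
      have hqj : q j = 0 := by
        rcases mul_eq_zero.1 hg0 with h | h
        · exact absurd h hPij
        · linarith
      rw [← hpi, hqj]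
    · rcases (hq j).eq_or_lt with hqj | hqj
      · exact absurd (hs i j hpi.ne' hqj.symm) hPij
      · by_contra hne
        have hne' : q j / p i ≠ 1 := fun h => hne (by field_simp at h; linarith)
        have hlt := Real.log_lt_sub_one_of_pos (div_pos hqj hpi) hne'
        rw [Real.log_div hqj.ne' hpi.ne'] at hlt
        have hqp : q j / p i * p i = q j := div_mul_cancel₀ _ hpi.ne'
        have heq' : p i * P i j * (Real.log (p i) - Real.log (q j)) = P i j * (p i - q j) := heq
        nlinarith [mul_lt_mul_of_pos_right hlt hpi, mul_lt_mul_of_pos_right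
          (mul_lt_mul_of_pos_right hlt hpi) hPij']
  · intro hcond
    rw [hS]
    apply Finset.sum_eq_zero; intro i _
    apply Finset.sum_eq_zero; intro j _
    by_cases hPij : P i j = 0
    · simp [hf, hPij]
    · simp only [hf]
      rw [hcond i j hPij]
      simp


lemma trace_diag_conj {n : Type*} [Fintype n] [DecidableEq n] (a b : n → ℝ) (W : Matrix n n ℂ) :
    Matrix.trace (Matrix.diagonal (fun i => (a i : ℂ)) * W *
        Matrix.diagonal (fun j => (b j : ℂ)) * star W)
      = ((∑ i, ∑ j, a i * Complex.normSq (W i j) * b j : ℝ) : ℂ) := by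
  have h1 : Matrix.diagonal (fun i => (a i : ℂ)) * W * Matrix.diagonal (fun j => (b j : ℂ))
      = Matrix.of (fun i j => (a i : ℂ) * W i j * b j) := by
    ext i j
    simp [Matrix.mul_diagonal, Matrix.diagonal_mul]
  rw [h1]
  push_cast
  simp only [Matrix.trace, Matrix.diag_apply, Matrix.mul_apply, Matrix.star_apply, Matrix.of_apply]
  rw [Finset.sum_congr rfl]
  intro i _
  rw [Finset.sum_congr rfl]
  intro j _
  rw [show ((a i:ℂ) * W i j * (b j:ℂ)) * star (W i j) = (a i:ℂ) * (W i j * star (W i j)) * b j by ring]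
  rw [show W i j * star (W i j) = ((Complex.normSq (W i j) : ℝ) : ℂ) from Complex.mul_conj _]

/-- Klein's inequality: for density matrices `ρ, σ` with
`supp ρ ⊆ supp σ`, `S(ρ‖σ) ≥ 0` with equality iff `ρ = σ`. -/
theorem stmt4 {n : Type*} [Fintype n] [DecidableEq n]
    (ρ σ : Matrix n n ℂ) (hρ : ρ.PosSemidef) (hσ : σ.PosSemidef)
    (hρ1 : Matrix.trace ρ = 1) (hσ1 : Matrix.trace σ = 1)
    (hsupp : LinearMap.range ρ.mulVecLin ≤ LinearMap.range σ.mulVecLin) :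
    0 ≤ qRelEnt hρ.1 hσ.1 ∧ (qRelEnt hρ.1 hσ.1 = 0 ↔ ρ = σ) := by
  set U : Matrix n n ℂ := (hρ.1.eigenvectorUnitary : Matrix n n ℂ) with hUdef
  set V : Matrix n n ℂ := (hσ.1.eigenvectorUnitary : Matrix n n ℂ) with hVdef
  set p : n → ℝ := hρ.1.eigenvalues with hpdef
  set q : n → ℝ := hσ.1.eigenvalues with hqdef
  set W : Matrix n n ℂ := star U * V with hWdef
  set P : n → n → ℝ := fun i j => Complex.normSq (W i j) with hPdef
  set Dp : Matrix n n ℂ := Matrix.diagonal (fun i => (p i : ℂ)) with hDpdef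
  set Dq : Matrix n n ℂ := Matrix.diagonal (fun j => (q j : ℂ)) with hDqdef
  set Dl : Matrix n n ℂ := Matrix.diagonal (fun j => (Real.log (q j) : ℂ)) with hDldef
  have hUU' : U * star U = 1 := Matrix.mem_unitaryGroup_iff.mp hρ.1.eigenvectorUnitary.2
  have hUU : star U * U = 1 := Matrix.mem_unitaryGroup_iff'.mp hρ.1.eigenvectorUnitary.2
  have hVV' : V * star V = 1 := Matrix.mem_unitaryGroup_iff.mp hσ.1.eigenvectorUnitary.2
  have hVV : star V * V = 1 := Matrix.mem_unitaryGroup_iff'.mp hσ.1.eigenvectorUnitary.2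
  have hρspec : ρ = U * Dp * star U := by
    have h := hρ.1.spectral_theorem
    rw [Unitary.conjStarAlgAut_apply] at h
    exact h
  have hσspec : σ = V * Dq * star V := by
    have h := hσ.1.spectral_theorem
    rw [Unitary.conjStarAlgAut_apply] at h
    exact h
  have hVW : V = U * W := by rw [hWdef, ← Matrix.mul_assoc, hUU', Matrix.one_mul]
  have hstarV : star V = star W * star U := by rw [hVW, StarMul.star_mul]
  have hstarW : star W = star V * U := by rw [hWdef, StarMul.star_mul, star_star]
  have hWW : W * star W = 1 := by
    rw [hstarW, hWdef, Matrix.mul_assoc, ← Matrix.mul_assoc V, hVV', Matrix.one_mul, hUU]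
  have hWsW : star W * W = 1 := by
    rw [hstarW, hWdef, Matrix.mul_assoc, ← Matrix.mul_assoc U, hUU', Matrix.one_mul, hVV]
  -- eigenvalue sums
  have hptr : ∑ i, p i = 1 := by
    have h := hρ1
    rw [hρspec, Matrix.trace_mul_cycle, hUU, Matrix.one_mul, hDpdef, Matrix.trace_diagonal] at h
    exact_mod_cast h
  have hqtr : ∑ j, q j = 1 := by
    have h := hσ1
    rw [hσspec, Matrix.trace_mul_cycle, hVV, Matrix.one_mul, hDqdef, Matrix.trace_diagonal] at h
    exact_mod_cast h
  have hpnn : ∀ i, 0 ≤ p i := fun i => hρ.eigenvalues_nonneg i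
  have hqnn : ∀ j, 0 ≤ q j := fun j => hσ.eigenvalues_nonneg j
  have hPnn : ∀ i j, 0 ≤ P i j := fun i j => Complex.normSq_nonneg _
  -- row and column sums of P
  have hrow : ∀ i, ∑ j, P i j = 1 := by
    intro i
    have h := congrFun (congrFun hWW i) i
    rw [Matrix.mul_apply] at h
    simp only [Matrix.star_apply, Matrix.one_apply_eq] at h
    have h2 : ((∑ j, P i j : ℝ) : ℂ) = 1 := by
      push_cast
      rw [← h]
      exact Finset.sum_congr rfl fun j _ => (Complex.mul_conj _).symm
    exact_mod_cast h2
  have hcol : ∀ j, ∑ i, P i j = 1 := by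
    intro j
    have h := congrFun (congrFun hWsW j) j
    rw [Matrix.mul_apply] at h
    simp only [Matrix.star_apply, Matrix.one_apply_eq] at h
    have h2 : ((∑ i, P i j : ℝ) : ℂ) = 1 := by
      push_cast
      rw [← h]
      exact Finset.sum_congr rfl fun i _ => by rw [mul_comm]; exact (Complex.mul_conj _).symm
    exact_mod_cast h2
  -- eigen-equations
  have hρU : ρ * U = U * Dp := by
    rw [hρspec, Matrix.mul_assoc, hUU, Matrix.mul_one]
  have hσV : σ * V = V * Dq := by
    rw [hσspec, Matrix.mul_assoc, hVV, Matrix.mul_one]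
  -- support condition
  have hsupp' : ∀ i j, p i ≠ 0 → q j = 0 → W i j = 0 := by
    intro i j hpi hqj
    set u : n → ℂ := fun k => U k i with hudef
    set v : n → ℂ := fun k => V k j with hvdef
    have hu : ρ.mulVec u = (p i : ℂ) • u := by
      funext k
      have h := congrFun (congrFun hρU k) i
      rw [Matrix.mul_apply, hDpdef, Matrix.mul_diagonal] at h
      simpa [Matrix.mulVec, dotProduct, hudef, mul_comm] using h
    have humem : u ∈ LinearMap.range ρ.mulVecLin := by
      refine ⟨(p i : ℂ)⁻¹ • u, ?_⟩
      rw [LinearMap.map_smul, Matrix.mulVecLin_apply, hu, smul_smul,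
        inv_mul_cancel₀ (Complex.ofReal_ne_zero.mpr hpi), one_smul]
    obtain ⟨x, hx⟩ := hsupp humem
    have hv : σ.mulVec v = 0 := by
      funext k
      have h := congrFun (congrFun hσV k) j
      rw [Matrix.mul_apply, hDqdef, Matrix.mul_diagonal] at h
      simp only [Matrix.mulVec, dotProduct, hvdef, Pi.zero_apply]
      rw [h, hqj]
      simp
    have hWij : W i j = dotProduct (star u) v := by
      simp [hWdef, Matrix.mul_apply, dotProduct, hudef, hvdef, Matrix.star_apply,
        Pi.star_apply]
    rw [hWij, ← hx, Matrix.mulVecLin_apply, Matrix.star_mulVec, ← Matrix.dotProduct_mulVec,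
      hσ.1.eq, hv, dotProduct_zero]
  -- the trace formula
  have hcancel : ∀ M : Matrix n n ℂ, star U * (U * M) = M := by
    intro M
    rw [← Matrix.mul_assoc, hUU, Matrix.one_mul]
  have hexp : ρ * matLog hσ.1 = U * (Dp * W * Dl * star W) * star U := by
    have hL : matLog hσ.1 = V * Dl * star V := rfl
    rw [hρspec, hL, hVW, StarMul.star_mul]
    simp only [Matrix.mul_assoc]
    rw [hcancel]
  have hρL : Matrix.trace (ρ * matLog hσ.1)
      = ((∑ i, ∑ j, p i * P i j * Real.log (q j) : ℝ) : ℂ) := by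
    rw [hexp, Matrix.trace_mul_cycle, ← Matrix.mul_assoc, hUU, Matrix.one_mul,
      hDpdef, hDldef, trace_diag_conj]
  have hqre : qRelEnt hρ.1 hσ.1
      = (∑ i, p i * Real.log (p i)) - (∑ i, ∑ j, p i * P i j * Real.log (q j)) := by
    unfold qRelEnt entSum
    rw [hρL, Complex.ofReal_re]
  -- apply the scalar lemma
  have hs : ∀ i j, p i ≠ 0 → q j = 0 → P i j = 0 := by
    intro i j h1 h2
    rw [hPdef]
    simp only
    rw [hsupp' i j h1 h2]
    simp
  obtain ⟨h1, h2⟩ := klein_scalar p q P hpnn hqnn hPnn hrow hcol hptr hqtr hs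
  rw [hqre]
  refine ⟨h1, h2.trans ?_⟩
  constructor
  · intro hc
    have hWcond : ∀ i j, W i j * (q j : ℂ) = (p i : ℂ) * W i j := by
      intro i j
      by_cases h : W i j = 0
      · simp [h]
      · have hPij : P i j ≠ 0 := fun h0 => h (Complex.normSq_eq_zero.mp h0)
        rw [hc i j hPij]; ring
    have hdiag : W * Dq * star W = Dp := by
      ext i k
      rw [Matrix.mul_apply]
      have hterm : ∀ j, (W * Dq) i j * (star W) j k = (p i : ℂ) * (W i j * star (W k j)) := by
        intro j
        rw [hDqdef, Matrix.mul_diagonal, Matrix.star_apply, hWcond]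
        ring
      rw [Finset.sum_congr rfl fun j _ => hterm j, ← Finset.mul_sum]
      have hsum : ∑ j, W i j * star (W k j) = (W * star W) i k := by
        rw [Matrix.mul_apply]
        exact Finset.sum_congr rfl fun j _ => by rw [Matrix.star_apply]
      rw [hsum, hWW]
      by_cases hik : i = k <;>
        simp [Matrix.one_apply, hDpdef, Matrix.diagonal_apply, hik]
    calc ρ = U * Dp * star U := hρspec
      _ = U * (W * Dq * star W) * star U := by rw [hdiag]
      _ = (U * W) * Dq * (star W * star U) := by simp only [Matrix.mul_assoc]
      _ = V * Dq * star V := by rw [← hVW, ← hstarV]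
      _ = σ := hσspec.symm
  · intro hρσ
    have hmain : Dp * W = W * Dq := by
      have e1 : star U * ρ * V = Dp * W := by
        rw [hρspec, hWdef]
        simp only [Matrix.mul_assoc]
        rw [hcancel]
      have e2 : star U * σ * V = W * Dq := by
        rw [hσspec, hWdef]
        simp only [Matrix.mul_assoc]
        rw [hVV, Matrix.mul_one]
      rw [← e1, ← e2, hρσ]
    intro i j hPij
    have h := congrFun (congrFun hmain i) j
    rw [hDpdef, hDqdef, Matrix.diagonal_mul, Matrix.mul_diagonal] at h
    have hW : W i j ≠ 0 := fun h0 => hPij (by rw [hPdef]; simp [h0])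
    have : (p i : ℂ) = (q j : ℂ) := by
      have h' : (p i : ℂ) * W i j = (q j : ℂ) * W i j := by rw [h]; ring
      exact mul_right_cancel₀ hW h'
    exact_mod_cast this
end

section
/- Let A be an n×n positive definite Hermitian matrix and Δ an n×n positive semi-definite Hermitian matrix with Δ ≠ 0, and let β₀ ∈ ℝ. Then G(β) = Tr(A exp(β₀Δ) exp(−βΔ) Δ) is strictly decreasing in β on ℝ and tends to 0 as β → +∞. -/
open Matrix Kronecker
open scoped ComplexOrder

/-- for positive definite `A` and nonzero PSD `Δ`,
`G(β) = Tr(A exp(β₀Δ) exp(−βΔ) Δ)` is strictly decreasing and tends to `0` as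
`β → +∞`. -/
theorem stmt18 {n : Type*} [Fintype n] [DecidableEq n]
    (A Δ : Matrix n n ℂ) (hA : A.PosDef) (hΔ : Δ.PosSemidef) (hΔ0 : Δ ≠ 0) (β₀ : ℝ) :
    StrictAnti (fun β : ℝ =>
      (Matrix.trace (A * NormedSpace.exp ((β₀ : ℂ) • Δ) *
        NormedSpace.exp ((-β : ℂ) • Δ) * Δ)).re) ∧
    Filter.Tendsto (fun β : ℝ =>
        (Matrix.trace (A * NormedSpace.exp ((β₀ : ℂ) • Δ) *
          NormedSpace.exp ((-β : ℂ) • Δ) * Δ)).re)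
      Filter.atTop (nhds 0) := by
  have hH := hΔ.1
  set U : Matrix n n ℂ := (hH.eigenvectorUnitary : Matrix n n ℂ) with hUdef
  have hU1 : star U * U = 1 := Matrix.mem_unitaryGroup_iff'.mp hH.eigenvectorUnitary.2
  have hU2 : U * star U = 1 := Matrix.mem_unitaryGroup_iff.mp hH.eigenvectorUnitary.2
  have hUinv : U⁻¹ = star U := Matrix.inv_eq_left_inv hU1
  have hUunit : IsUnit U := Matrix.isUnit_iff_isUnit_det U |>.mpr (by
    have := Matrix.det_mul U (star U); rw [hU2, Matrix.det_one] at this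
    exact IsUnit.of_mul_eq_one _ this.symm)
  set lam := hH.eigenvalues with hlam
  have hspec : Δ = U * Matrix.diagonal (fun i => (lam i : ℂ)) * star U := by
    exact hH.spectral_theorem
  have hexp : ∀ c : ℂ, NormedSpace.exp (c • Δ) =
      U * Matrix.diagonal (fun i => Complex.exp (c * lam i)) * star U := by
    intro c
    have h1 : c • Δ = U * Matrix.diagonal (fun i => c * (lam i : ℂ)) * U⁻¹ := by
      rw [hUinv, hspec, ← Matrix.smul_mul, ← Matrix.mul_smul]
      congr 2
      ext i j
      by_cases h : i = j <;> simp [Matrix.diagonal_apply, h]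
    rw [h1, Matrix.exp_conj U _ hUunit, Matrix.exp_diagonal, hUinv]
    congr 2
    ext i j
    by_cases h : i = j <;>
      simp [Matrix.diagonal_apply, h, Pi.exp_def, ← Complex.exp_eq_exp_ℂ]
  have hcomb : ∀ X Y : n → ℂ, (U * Matrix.diagonal X * star U) *
      (U * Matrix.diagonal Y * star U) =
      U * Matrix.diagonal (fun i => X i * Y i) * star U := by
    intro X Y
    simp only [Matrix.mul_assoc]
    rw [← Matrix.mul_assoc (star U) U, hU1, Matrix.one_mul,
      ← Matrix.mul_assoc (Matrix.diagonal X) (Matrix.diagonal Y),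
      Matrix.diagonal_mul_diagonal]
  set B := star U * A * U with hBdef
  -- diagonal entries of B are positive
  have hBpos : ∀ i, 0 < (B i i).re := by
    intro i
    set u : n → ℂ := fun k => U k i with hu
    have hu0 : u ≠ 0 := by
      intro h
      have h1 : (star U * U) i i = 1 := by rw [hU1]; simp
      rw [Matrix.mul_apply] at h1
      simp only [Matrix.star_apply] at h1
      have : ∀ j, U j i = 0 := fun j => congrFun h j
      simp [this] at h1
    have hB : B i i = dotProduct (star u) (A.mulVec u) := by
      rw [hBdef]
      simp only [Matrix.mul_apply, Matrix.mulVec, dotProduct,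
        Matrix.star_apply, Finset.sum_mul, Finset.mul_sum, Pi.star_apply]
      rw [Finset.sum_comm]
      refine Finset.sum_congr rfl fun k _ => Finset.sum_congr rfl fun j _ => ?_
      ring
    have := hA.dotProduct_mulVec_pos hu0
    rw [← hB] at this
    exact (Complex.lt_def.mp this).1
  have hlamnn : ∀ i, 0 ≤ lam i := hΔ.eigenvalues_nonneg
  have hex : ∃ i, lam i ≠ 0 := by
    by_contra h
    push_neg at h
    apply hΔ0
    rw [hspec]
    have : (Matrix.diagonal fun i => (lam i : ℂ)) = 0 := by
      ext i j; by_cases hij : i = j <;> simp [Matrix.diagonal_apply, hij, h]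
    simp [this]
  set c : n → ℝ := fun i => (B i i).re * Real.exp (β₀ * lam i) * lam i with hc
  have hcnn : ∀ i, 0 ≤ c i := fun i =>
    mul_nonneg (mul_nonneg (hBpos i).le (Real.exp_pos _).le) (hlamnn i)
  obtain ⟨i₀, hi₀⟩ := hex
  have hlam₀ : 0 < lam i₀ := lt_of_le_of_ne (hlamnn i₀) (Ne.symm hi₀)
  have hcpos : 0 < c i₀ :=
    mul_pos (mul_pos (hBpos i₀) (Real.exp_pos _)) hlam₀
  -- key identity
  have hkey : ∀ β : ℝ,
      (Matrix.trace (A * NormedSpace.exp ((β₀ : ℂ) • Δ) *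
        NormedSpace.exp ((-β : ℂ) • Δ) * Δ)).re =
      ∑ i, c i * Real.exp (-β * lam i) := by
    intro β
    have hm : A * NormedSpace.exp ((β₀ : ℂ) • Δ) *
        NormedSpace.exp ((-β : ℂ) • Δ) * Δ =
        A * (U * Matrix.diagonal
          (fun i => Complex.exp ((β₀ : ℂ) * lam i) *
            (Complex.exp ((-β : ℂ) * lam i) * (lam i : ℂ))) * star U) := by
      rw [hexp (β₀ : ℂ), hexp ((-β : ℂ))]
      conv_lhs => rw [hspec]
      rw [Matrix.mul_assoc (A * _), hcomb, Matrix.mul_assoc A, hcomb]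
    rw [hm]
    have ht : Matrix.trace (A * (U * Matrix.diagonal
        (fun i => Complex.exp ((β₀ : ℂ) * lam i) *
          (Complex.exp ((-β : ℂ) * lam i) * (lam i : ℂ))) * star U)) =
        ∑ i, B i i * (Complex.exp ((β₀ : ℂ) * lam i) *
          (Complex.exp ((-β : ℂ) * lam i) * (lam i : ℂ))) := by
      rw [show A * (U * Matrix.diagonal _ * star U) = A * U * Matrix.diagonal
          (fun i => Complex.exp ((β₀ : ℂ) * lam i) *
            (Complex.exp ((-β : ℂ) * lam i) * (lam i : ℂ))) * star U by
        simp only [Matrix.mul_assoc]]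
      rw [Matrix.trace_mul_cycle]
      rw [hBdef]
      simp [Matrix.trace, Matrix.diag, Matrix.mul_diagonal, Matrix.mul_assoc]
    rw [ht]
    rw [Complex.re_sum]
    refine Finset.sum_congr rfl fun i _ => ?_
    have h1 : Complex.exp ((β₀ : ℂ) * lam i) = ((Real.exp (β₀ * lam i) : ℝ) : ℂ) := by
      rw [Complex.ofReal_exp]; norm_cast
    have h2 : Complex.exp ((-β : ℂ) * lam i) = ((Real.exp (-β * lam i) : ℝ) : ℂ) := by
      rw [Complex.ofReal_exp]; norm_cast
    rw [h1, h2, hc]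
    rw [show ((Real.exp (β₀ * lam i) : ℂ) * ((Real.exp (-β * lam i) : ℂ) * ((lam i : ℝ) : ℂ)))
        = ((Real.exp (β₀ * lam i) * (Real.exp (-β * lam i) * lam i) : ℝ) : ℂ) by
      push_cast; ring]
    rw [Complex.mul_re, Complex.ofReal_re, Complex.ofReal_im]
    simp only [mul_zero, sub_zero]
    ring
  constructor
  · intro β1 β2 hb
    simp only
    rw [hkey β1, hkey β2]
    refine Finset.sum_lt_sum (fun i _ => ?_) ⟨i₀, Finset.mem_univ _, ?_⟩
    · refine mul_le_mul_of_nonneg_left ?_ (hcnn i)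
      exact Real.exp_le_exp.mpr (by nlinarith [hlamnn i])
    · refine mul_lt_mul_of_pos_left ?_ hcpos
      exact Real.exp_lt_exp.mpr (by nlinarith)
  · have := funext hkey
    rw [this]
    have hterm : ∀ i : n, Filter.Tendsto (fun β : ℝ => c i * Real.exp (-β * lam i))
        Filter.atTop (nhds 0) := by
      intro i
      rcases eq_or_lt_of_le (hlamnn i) with h0 | hpos
      · have hc0 : c i = 0 := by rw [hc]; simp [← h0]
        simp [hc0]
      · have h1 : Filter.Tendsto (fun β : ℝ => -β * lam i) Filter.atTop Filter.atBot := by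
          have : Filter.Tendsto (fun β : ℝ => β * (-lam i)) Filter.atTop Filter.atBot :=
            Filter.Tendsto.atTop_mul_const_of_neg (neg_neg_iff_pos.mpr hpos) Filter.tendsto_id
          convert this using 2 with β
          ring
        have h2 := Real.tendsto_exp_atBot.comp h1
        have h3 := h2.const_mul (c i)
        simpa using h3
    have := tendsto_finset_sum Finset.univ (fun i (_ : i ∈ Finset.univ) => hterm i)
    simpa using this
end
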